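/- Let m be an n-multiweb on finite vertex sets W, B with ordering data L, and let L' be obtained from L by changing the order at a single vertex v₀ as follows: if the edges at v₀ in the order L are e₁ < e₂ < … < e_k, then in L' they are ordered e₂ < … < e_k < e₁ (rotating the cilium at v₀ by one 'click' past the edge e₁). Then for every M_n(ℝ)-connection φ one has Tr_{L'}(m, φ) = ε · Tr_L(m, φ), where ε = +1 if n is odd, and ε = (−1)^{m(e₁)} if n is even, m(e₁) being the multiplicity of the edge e₁ crossed by the rotating cilium. -/

import Mathlib

/-- The sign `(−1)^{inversions}` of a list of naturals: the signature of the permutation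
it represents when it lists a set of distinct values. -/
def listSign (l : List ℕ) : ℤ :=
  (-1) ^ ((Finset.range l.length ×ˢ Finset.range l.length).filter
      (fun p => p.1 < p.2 ∧ l.getD p.2 0 < l.getD p.1 0)).card

def invCount (l : List ℕ) : ℕ :=
  ((Finset.range l.length ×ˢ Finset.range l.length).filter
      (fun p => p.1 < p.2 ∧ l.getD p.2 0 < l.getD p.1 0)).card

lemma listSign_eq_pow (l : List ℕ) : listSign l = (-1) ^ invCount l := rfl

def crossCount (l₁ l₂ : List ℕ) : ℕ :=
  ((Finset.range l₁.length ×ˢ Finset.range l₂.length).filter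
      (fun p => l₂.getD p.2 0 < l₁.getD p.1 0)).card

lemma invCount_append (l₁ l₂ : List ℕ) :
    invCount (l₁ ++ l₂) = invCount l₁ + invCount l₂ + crossCount l₁ l₂ := by
  classical
  unfold invCount crossCount
  rw [List.length_append]
  have hsplit1 :
      (((Finset.range (l₁.length + l₂.length) ×ˢ Finset.range (l₁.length + l₂.length)).filter
        (fun p => p.1 < p.2 ∧ (l₁ ++ l₂).getD p.2 0 < (l₁ ++ l₂).getD p.1 0)).filter
          (fun z => z.2 < l₁.length)).card
      + (((Finset.range (l₁.length + l₂.length) ×ˢ Finset.range (l₁.length + l₂.length)).filter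
        (fun p => p.1 < p.2 ∧ (l₁ ++ l₂).getD p.2 0 < (l₁ ++ l₂).getD p.1 0)).filter
          (fun z => ¬ z.2 < l₁.length)).card
      = ((Finset.range (l₁.length + l₂.length) ×ˢ Finset.range (l₁.length + l₂.length)).filter
        (fun p => p.1 < p.2 ∧ (l₁ ++ l₂).getD p.2 0 < (l₁ ++ l₂).getD p.1 0)).card :=
    Finset.card_filter_add_card_filter_not _
  have hsplit2 :
      ((((Finset.range (l₁.length + l₂.length) ×ˢ Finset.range (l₁.length + l₂.length)).filter
        (fun p => p.1 < p.2 ∧ (l₁ ++ l₂).getD p.2 0 < (l₁ ++ l₂).getD p.1 0)).filter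
          (fun z => ¬ z.2 < l₁.length)).filter (fun z => z.1 < l₁.length)).card
      + ((((Finset.range (l₁.length + l₂.length) ×ˢ Finset.range (l₁.length + l₂.length)).filter
        (fun p => p.1 < p.2 ∧ (l₁ ++ l₂).getD p.2 0 < (l₁ ++ l₂).getD p.1 0)).filter
          (fun z => ¬ z.2 < l₁.length)).filter (fun z => ¬ z.1 < l₁.length)).card
      = (((Finset.range (l₁.length + l₂.length) ×ˢ Finset.range (l₁.length + l₂.length)).filter
        (fun p => p.1 < p.2 ∧ (l₁ ++ l₂).getD p.2 0 < (l₁ ++ l₂).getD p.1 0)).filter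
          (fun z => ¬ z.2 < l₁.length)).card :=
    Finset.card_filter_add_card_filter_not _
  have h1 :
      (((Finset.range (l₁.length + l₂.length) ×ˢ Finset.range (l₁.length + l₂.length)).filter
        (fun p => p.1 < p.2 ∧ (l₁ ++ l₂).getD p.2 0 < (l₁ ++ l₂).getD p.1 0)).filter
          (fun z => z.2 < l₁.length))
      = ((Finset.range l₁.length ×ˢ Finset.range l₁.length).filter
        (fun p => p.1 < p.2 ∧ l₁.getD p.2 0 < l₁.getD p.1 0)) := by
    ext ⟨i, j⟩
    simp only [Finset.mem_filter, Finset.mem_product, Finset.mem_range]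
    constructor
    · rintro ⟨⟨⟨hi, hj⟩, hij, hval⟩, hjp⟩
      have hip : i < l₁.length := lt_trans hij hjp
      rw [List.getD_append _ _ _ _ hjp, List.getD_append _ _ _ _ hip] at hval
      exact ⟨⟨hip, hjp⟩, hij, hval⟩
    · rintro ⟨⟨hip, hjp⟩, hij, hval⟩
      rw [← List.getD_append l₁ l₂ 0 j hjp, ← List.getD_append l₁ l₂ 0 i hip] at hval
      exact ⟨⟨⟨by omega, by omega⟩, hij, hval⟩, hjp⟩
  have h2 :
      ((((Finset.range (l₁.length + l₂.length) ×ˢ Finset.range (l₁.length + l₂.length)).filter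
        (fun p => p.1 < p.2 ∧ (l₁ ++ l₂).getD p.2 0 < (l₁ ++ l₂).getD p.1 0)).filter
          (fun z => ¬ z.2 < l₁.length)).filter (fun z => ¬ z.1 < l₁.length)).card
      = ((Finset.range l₂.length ×ˢ Finset.range l₂.length).filter
        (fun p => p.1 < p.2 ∧ l₂.getD p.2 0 < l₂.getD p.1 0)).card := by
    apply Finset.card_bij' (fun z _ => (z.1 - l₁.length, z.2 - l₁.length))
      (fun z _ => (z.1 + l₁.length, z.2 + l₁.length))
    case hi =>
      rintro ⟨i, j⟩ ha
      simp only [Finset.mem_filter, Finset.mem_product, Finset.mem_range] at ha ⊢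
      obtain ⟨⟨⟨⟨hi, hj⟩, hij, hval⟩, hjp⟩, hip⟩ := ha
      rw [List.getD_append_right _ _ _ _ (by omega), List.getD_append_right _ _ _ _ (by omega)] at hval
      exact ⟨⟨by omega, by omega⟩, by omega, hval⟩
    case hj =>
      rintro ⟨i, j⟩ ha
      simp only [Finset.mem_filter, Finset.mem_product, Finset.mem_range] at ha ⊢
      obtain ⟨⟨hi, hj⟩, hij, hval⟩ := ha
      rw [List.getD_append_right l₁ l₂ _ _ (by omega : l₁.length ≤ j + l₁.length),
        List.getD_append_right l₁ l₂ _ _ (by omega : l₁.length ≤ i + l₁.length)]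
      simp only [Nat.add_sub_cancel]
      exact ⟨⟨⟨⟨by omega, by omega⟩, by omega, hval⟩, by omega⟩, by omega⟩
    case left_inv =>
      rintro ⟨i, j⟩ ha
      simp only [Finset.mem_filter, Finset.mem_product, Finset.mem_range] at ha
      obtain ⟨⟨⟨⟨hi, hj⟩, hij, hval⟩, hjp⟩, hip⟩ := ha
      simp only [Prod.mk.injEq]
      omega
    case right_inv =>
      rintro ⟨i, j⟩ _
      simp [Nat.add_sub_cancel]
  have h3 :
      ((((Finset.range (l₁.length + l₂.length) ×ˢ Finset.range (l₁.length + l₂.length)).filter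
        (fun p => p.1 < p.2 ∧ (l₁ ++ l₂).getD p.2 0 < (l₁ ++ l₂).getD p.1 0)).filter
          (fun z => ¬ z.2 < l₁.length)).filter (fun z => z.1 < l₁.length)).card
      = ((Finset.range l₁.length ×ˢ Finset.range l₂.length).filter
        (fun p => l₂.getD p.2 0 < l₁.getD p.1 0)).card := by
    apply Finset.card_bij' (fun z _ => (z.1, z.2 - l₁.length))
      (fun z _ => (z.1, z.2 + l₁.length))
    case hi =>
      rintro ⟨i, j⟩ ha
      simp only [Finset.mem_filter, Finset.mem_product, Finset.mem_range] at ha ⊢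
      obtain ⟨⟨⟨⟨hi, hj⟩, hij, hval⟩, hjp⟩, hip⟩ := ha
      rw [List.getD_append_right _ _ _ _ (by omega), List.getD_append _ _ _ _ hip] at hval
      exact ⟨⟨by omega, by omega⟩, hval⟩
    case hj =>
      rintro ⟨i, j⟩ ha
      simp only [Finset.mem_filter, Finset.mem_product, Finset.mem_range] at ha ⊢
      obtain ⟨⟨hi, hj⟩, hval⟩ := ha
      rw [List.getD_append_right l₁ l₂ _ _ (by omega : l₁.length ≤ j + l₁.length),
        List.getD_append l₁ l₂ _ _ hi]
      simp only [Nat.add_sub_cancel]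
      exact ⟨⟨⟨⟨by omega, by omega⟩, by omega, hval⟩, by omega⟩, hi⟩
    case left_inv =>
      rintro ⟨i, j⟩ ha
      simp only [Finset.mem_filter, Finset.mem_product, Finset.mem_range] at ha
      obtain ⟨⟨⟨⟨hi, hj⟩, hij, hval⟩, hjp⟩, hip⟩ := ha
      simp only [Prod.mk.injEq]
      exact ⟨trivial, by omega⟩
    case right_inv =>
      rintro ⟨i, j⟩ _
      simp [Nat.add_sub_cancel]
  rw [h1] at hsplit1
  omega

lemma crossCount_add_crossCount (l₁ l₂ : List ℕ)
    (h : ∀ a ∈ l₁, ∀ b ∈ l₂, a ≠ b) :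
    crossCount l₁ l₂ + crossCount l₂ l₁ = l₁.length * l₂.length := by
  classical
  unfold crossCount
  have hswap : ((Finset.range l₂.length ×ˢ Finset.range l₁.length).filter
      (fun z : ℕ × ℕ => l₁.getD z.2 0 < l₂.getD z.1 0)).card
      = ((Finset.range l₁.length ×ˢ Finset.range l₂.length).filter
      (fun z : ℕ × ℕ => l₁.getD z.1 0 < l₂.getD z.2 0)).card := by
    apply Finset.card_bij' (fun z _ => Prod.swap z) (fun z _ => Prod.swap z)
    case hi =>
      rintro ⟨i, j⟩ ha
      simp only [Finset.mem_filter, Finset.mem_product, Finset.mem_range] at ha ⊢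
      exact ⟨⟨ha.1.2, ha.1.1⟩, ha.2⟩
    case hj =>
      rintro ⟨i, j⟩ ha
      simp only [Finset.mem_filter, Finset.mem_product, Finset.mem_range] at ha ⊢
      exact ⟨⟨ha.1.2, ha.1.1⟩, ha.2⟩
    case left_inv => rintro ⟨i, j⟩ _; rfl
    case right_inv => rintro ⟨i, j⟩ _; rfl
  rw [hswap]
  have htot := Finset.card_filter_add_card_filter_not
    (s := Finset.range l₁.length ×ˢ Finset.range l₂.length)
    (fun z : ℕ × ℕ => l₂.getD z.2 0 < l₁.getD z.1 0)
  rw [Finset.card_product, Finset.card_range, Finset.card_range] at htot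
  rw [← htot]
  congr 2
  apply Finset.filter_congr
  rintro ⟨i, j⟩ hz
  simp only [Finset.mem_product, Finset.mem_range] at hz
  have ha : l₁.getD i 0 ∈ l₁ := by
    rw [List.getD_eq_getElem _ _ hz.1]; exact List.getElem_mem _
  have hb : l₂.getD j 0 ∈ l₂ := by
    rw [List.getD_eq_getElem _ _ hz.2]; exact List.getElem_mem _
  have hne := h _ ha _ hb
  simp only [eq_iff_iff]
  omega

lemma listSign_append_swap (l₁ l₂ : List ℕ)
    (h : ∀ a ∈ l₁, ∀ b ∈ l₂, a ≠ b) :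
    listSign (l₁ ++ l₂) = (-1) ^ (l₁.length * l₂.length) * listSign (l₂ ++ l₁) := by
  have e1 := invCount_append l₁ l₂
  have e2 := invCount_append l₂ l₁
  have e3 := crossCount_add_crossCount l₁ l₂ h
  rw [listSign_eq_pow, listSign_eq_pow]
  have hsum : invCount (l₁ ++ l₂) + invCount (l₂ ++ l₁)
      = 2 * (invCount l₁ + invCount l₂) + l₁.length * l₂.length := by omega
  have key : ((-1 : ℤ)) ^ (invCount (l₁ ++ l₂)) * (-1) ^ (invCount (l₂ ++ l₁))
      = (-1) ^ (l₁.length * l₂.length) := by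
    rw [← pow_add, hsum, pow_add, pow_mul, neg_one_sq, one_pow, one_mul]
  have hB : ((-1 : ℤ)) ^ (invCount (l₂ ++ l₁)) * (-1) ^ (invCount (l₂ ++ l₁)) = 1 := by
    rw [← pow_add]
    exact Even.neg_one_pow ⟨_, rfl⟩
  calc ((-1 : ℤ)) ^ (invCount (l₁ ++ l₂))
      = ((-1 : ℤ)) ^ (invCount (l₁ ++ l₂)) * ((-1) ^ (invCount (l₂ ++ l₁)) * (-1) ^ (invCount (l₂ ++ l₁))) := by
        rw [hB, mul_one]
    _ = (((-1 : ℤ)) ^ (invCount (l₁ ++ l₂)) * (-1) ^ (invCount (l₂ ++ l₁))) * (-1) ^ (invCount (l₂ ++ l₁)) := by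
        ring
    _ = (-1) ^ (l₁.length * l₂.length) * (-1) ^ (invCount (l₂ ++ l₁)) := by rw [key]


lemma neg_one_pow_mul_of_add (k L n : ℕ) (h : k + L = n) :
    ((-1 : ℤ)) ^ (L * k) = if Odd n then 1 else (-1) ^ k := by
  subst h
  rcases Nat.even_or_odd k with hk | hk <;> rcases Nat.even_or_odd L with hl | hl
  · rw [if_neg (Nat.not_odd_iff_even.mpr (hk.add hl)),
      Even.neg_one_pow (hk.mul_left L), Even.neg_one_pow hk]
  · rw [if_pos (hk.add_odd hl), Even.neg_one_pow (hk.mul_left L)]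
  · rw [if_pos (hk.add_even hl), Even.neg_one_pow (hl.mul_right k)]
  · rw [if_neg (Nat.not_odd_iff_even.mpr (hk.add_odd hl)),
      Odd.neg_one_pow (hl.mul hk), Odd.neg_one_pow hk]

lemma listSign_flatMap_rotate {V : Type*} [Fintype V] [DecidableEq V] {n : ℕ}
    (f : V → Finset (Fin n)) (g : V → List ℕ) (v₁ : V) (t : List V)
    (hg : g = fun v => (Finset.sort (f v) (· ≤ ·)).map Fin.val)
    (hnd : (v₁ :: t).Nodup)
    (hmem : ∀ v, v ∈ v₁ :: t)
    (hdisj : ∀ v v', v ≠ v' → Disjoint (f v) (f v'))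
    (hcover : Finset.univ.biUnion f = Finset.univ) :
    listSign ((t ++ [v₁]).flatMap g)
      = (if Odd n then 1 else (-1 : ℤ) ^ ((f v₁).card)) *
        listSign ((v₁ :: t).flatMap g) := by
  classical
  have hglen : ∀ v, (g v).length = (f v).card := by
    intro v; simp [hg]
  have hmemg : ∀ v a, a ∈ g v ↔ ∃ x ∈ f v, (x : Fin n).val = a := by
    intro v a; simp [hg]
  -- rewrite the two flatMaps
  have e1 : (t ++ [v₁]).flatMap g = t.flatMap g ++ g v₁ := by
    rw [List.flatMap_append]; simp
  have e2 : (v₁ :: t).flatMap g = g v₁ ++ t.flatMap g := by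
    simp [List.flatMap_cons]
  rw [e1, e2]
  have hdisjvals : ∀ a ∈ t.flatMap g, ∀ b ∈ g v₁, a ≠ b := by
    intro a ha b hb
    rw [List.mem_flatMap] at ha
    obtain ⟨v, hv, hav⟩ := ha
    have hvne : v ≠ v₁ := by
      rintro rfl
      exact (List.nodup_cons.mp hnd).1 hv
    obtain ⟨x, hx, hxa⟩ := (hmemg v a).mp hav
    obtain ⟨y, hy, hyb⟩ := (hmemg v₁ b).mp hb
    intro hab
    have : x = y := Fin.val_injective (by rw [hxa, hyb, hab])
    subst this
    exact (Finset.disjoint_left.mp (hdisj v v₁ hvne) hx) hy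
  rw [listSign_append_swap _ _ hdisjvals]
  congr 1
  -- lengths
  have hk : (g v₁).length = (f v₁).card := hglen v₁
  have htotal : (g v₁).length + (t.flatMap g).length = n := by
    have h1 : ((v₁ :: t).flatMap g).length = n := by
      rw [List.length_flatMap]
      have : (List.map (fun a => (g a).length) (v₁ :: t)).sum
          = (List.map (fun v => (f v).card) (v₁ :: t)).sum := by
        congr 1
        exact List.map_congr_left (fun v _ => by simp [hglen v])
      rw [this, ← List.sum_toFinset _ hnd]
      have huniv : (v₁ :: t).toFinset = (Finset.univ : Finset V) := by
        apply Finset.eq_univ_of_forall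
        intro v; simpa using hmem v
      rw [huniv, ← Finset.card_biUnion (fun x _ y _ hxy => hdisj x y hxy), hcover,
        Finset.card_univ, Fintype.card_fin]
    rw [List.flatMap_cons, List.length_append] at h1
    omega
  rw [hk] at htotal ⊢
  exact neg_one_pow_mul_of_add _ _ _ (by omega)


/-- The determinant of the square submatrix of `M` with rows `S` and columns `T`, each
taken in increasing order; junk value `0` if `|S| ≠ |T|`. -/
def subdet {n : ℕ} (M : Matrix (Fin n) (Fin n) ℝ) (S T : Finset (Fin n)) : ℝ :=
  if h : T.card = S.card then
    Matrix.det (Matrix.of fun i j : Fin S.card =>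
      M (S.orderEmbOfFin rfl i) (T.orderEmbOfFin h j))
  else 0

/-- An `n`-multiweb on white vertices `W` and black vertices `B`: all row and column
sums of the multiplicity function equal `n`. -/
def IsMultiweb {W B : Type*} [Fintype W] [Fintype B] (n : ℕ) (m : W × B → ℕ) : Prop :=
  (∀ w : W, ∑ b : B, m (w, b) = n) ∧ (∀ b : B, ∑ w : W, m (w, b) = n)

/-- Ordering data: at each vertex, a list enumerating the opposite vertices once each
(inducing in particular a linear order on the incident edges). -/
def IsOrderData {W B : Type*} [Fintype W] [Fintype B]
    (LW : W → List B) (LB : B → List W) : Prop :=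
  (∀ w, (LW w).Nodup ∧ ∀ b, b ∈ LW w) ∧ (∀ b, (LB b).Nodup ∧ ∀ w, w ∈ LB b)

/-- The colorings of a multiweb `m`: pairs `(S,T)` of functions assigning to each edge
`(w,b)` subsets of `{1,…,n}` of size `m(w,b)`, such that at each white vertex the `S`-sets
partition the colors and at each black vertex the `T`-sets partition the colors. -/
def colorings {W B : Type*} [Fintype W] [Fintype B] [DecidableEq W] [DecidableEq B]
    (n : ℕ) (m : W × B → ℕ) :
    Finset ((W × B → Finset (Fin n)) × (W × B → Finset (Fin n))) :=
  Finset.univ.filter fun ST =>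
    (∀ p, (ST.1 p).card = m p) ∧ (∀ p, (ST.2 p).card = m p) ∧
    (∀ w : W, ∀ b b' : B, b ≠ b' → Disjoint (ST.1 (w, b)) (ST.1 (w, b'))) ∧
    (∀ w : W, Finset.univ.biUnion (fun b : B => ST.1 (w, b)) = Finset.univ) ∧
    (∀ b : B, ∀ w w' : W, w ≠ w' → Disjoint (ST.2 (w, b)) (ST.2 (w', b))) ∧
    (∀ b : B, Finset.univ.biUnion (fun w : W => ST.2 (w, b)) = Finset.univ)

/-- The sign `c_w` at a white vertex `w`: the signature of the permutation of `{1,…,n}`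
obtained by concatenating the sets `S(w,b)`, each listed in increasing order, in the
order of the edges at `w` given by the ordering data. -/
def whiteSign {W B : Type*} {n : ℕ} (LW : W → List B)
    (S : W × B → Finset (Fin n)) (w : W) : ℤ :=
  listSign ((LW w).flatMap fun b => (Finset.sort (S (w, b)) (· ≤ ·)).map Fin.val)

/-- The sign `c_b` at a black vertex `b`, defined analogously using the sets `T(·,b)`. -/
def blackSign {W B : Type*} {n : ℕ} (LB : B → List W)
    (T : W × B → Finset (Fin n)) (b : B) : ℤ :=
  listSign ((LB b).flatMap fun w => (Finset.sort (T (w, b)) (· ≤ ·)).map Fin.val)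

/-- The web-trace `Tr_L(m, φ)` of a multiweb `m` with ordering data `L = (LW, LB)` and
`M_n(ℝ)`-connection `φ` (combinatorial formula of Proposition 3.2):
`Σ_{colorings (S,T)} (∏_v c_v) · ∏_{(w,b)} det(φ(w,b)_{S(w,b),T(w,b)})`. -/
def webTrace {W B : Type*} [Fintype W] [Fintype B] [DecidableEq W] [DecidableEq B]
    (n : ℕ) (m : W × B → ℕ) (LW : W → List B) (LB : B → List W)
    (φ : W × B → Matrix (Fin n) (Fin n) ℝ) : ℝ :=
  ∑ ST ∈ colorings n m,
    (((∏ w, whiteSign LW ST.1 w) * ∏ b, blackSign LB ST.2 b : ℤ) : ℝ) *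
      ∏ p : W × B, subdet (φ p) (ST.1 p) (ST.2 p)

/-- Proposition 3.4: rotating the cilium at a single vertex `v₀` by one "click" past the
edge `e₁` (so the order `e₁ < e₂ < … < e_k` at `v₀` becomes `e₂ < … < e_k < e₁`)
multiplies the web-trace by `ε`, where `ε = +1` if `n` is odd and `ε = (−1)^{m(e₁)}` if
`n` is even.  The vertex `v₀` may be white or black. -/
theorem webTrace_cilium_rotation {W B : Type*}
    [Fintype W] [Fintype B] [DecidableEq W] [DecidableEq B]
    (n : ℕ) (hn : 1 ≤ n) (m : W × B → ℕ) (hm : IsMultiweb n m)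
    (LW LW' : W → List B) (LB LB' : B → List W)
    (hL : IsOrderData LW LB) (hL' : IsOrderData LW' LB')
    (φ : W × B → Matrix (Fin n) (Fin n) ℝ) (ε : ℝ)
    (hrot :
      (∃ (w₀ : W) (b₁ : B) (t : List B),
        LW w₀ = b₁ :: t ∧ LW' w₀ = t ++ [b₁] ∧ (∀ w, w ≠ w₀ → LW' w = LW w) ∧
        LB' = LB ∧ ε = if Odd n then 1 else (-1 : ℝ) ^ (m (w₀, b₁))) ∨
      (∃ (b₀ : B) (w₁ : W) (t : List W),
        LB b₀ = w₁ :: t ∧ LB' b₀ = t ++ [w₁] ∧ (∀ b, b ≠ b₀ → LB' b = LB b) ∧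
        LW' = LW ∧ ε = if Odd n then 1 else (-1 : ℝ) ^ (m (w₁, b₀)))) :
    webTrace n m LW' LB' φ = ε * webTrace n m LW LB φ := by
  classical
  rcases hrot with ⟨w₀, b₁, t, hL1, hL2, hoth, hLBeq, hε⟩ |
    ⟨b₀, w₁, t, hL1, hL2, hoth, hLWeq, hε⟩
  · -- white vertex case
    subst hLBeq
    have hεℤ : ε = (((if Odd n then 1 else (-1 : ℤ) ^ (m (w₀, b₁))) : ℤ) : ℝ) := by
      rw [hε]; split_ifs <;> push_cast <;> ring
    rw [hεℤ]
    unfold webTrace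
    rw [Finset.mul_sum]
    apply Finset.sum_congr rfl
    intro ST hST
    rw [colorings, Finset.mem_filter] at hST
    obtain ⟨-, hc1, hc2, hc3, hc4, hc5, hc6⟩ := hST
    have hw₀ : whiteSign LW' ST.1 w₀
        = (if Odd n then 1 else (-1 : ℤ) ^ (m (w₀, b₁))) * whiteSign LW ST.1 w₀ := by
      unfold whiteSign
      rw [hL1, hL2]
      have hnd : (b₁ :: t).Nodup := by rw [← hL1]; exact (hL.1 w₀).1
      have hmem : ∀ b, b ∈ b₁ :: t := by rw [← hL1]; exact (hL.1 w₀).2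
      have := listSign_flatMap_rotate (fun b => ST.1 (w₀, b))
        (fun b => (Finset.sort (ST.1 (w₀, b)) (· ≤ ·)).map Fin.val) b₁ t rfl hnd hmem
        (fun b b' hbb' => hc3 w₀ b b' hbb') (hc4 w₀)
      rw [this, hc1 (w₀, b₁)]
    have hprod : ∏ w, whiteSign LW' ST.1 w
        = (if Odd n then 1 else (-1 : ℤ) ^ (m (w₀, b₁))) * ∏ w, whiteSign LW ST.1 w := by
      calc ∏ w, whiteSign LW' ST.1 w
          = ∏ w, (if w = w₀ then (if Odd n then 1 else (-1 : ℤ) ^ (m (w₀, b₁))) else 1)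
              * whiteSign LW ST.1 w := by
            apply Finset.prod_congr rfl
            intro w _
            by_cases hw : w = w₀
            · subst hw; rw [if_pos rfl, hw₀]
            · rw [if_neg hw, one_mul]
              unfold whiteSign
              rw [hoth w hw]
        _ = (∏ w, if w = w₀ then (if Odd n then 1 else (-1 : ℤ) ^ (m (w₀, b₁))) else 1)
              * ∏ w, whiteSign LW ST.1 w := Finset.prod_mul_distrib
        _ = _ := by
            rw [Finset.prod_ite_eq' Finset.univ w₀
              (fun _ => (if Odd n then 1 else (-1 : ℤ) ^ (m (w₀, b₁))))]
            simp
    rw [hprod]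
    push_cast
    ring
  · -- black vertex case
    subst hLWeq
    have hεℤ : ε = (((if Odd n then 1 else (-1 : ℤ) ^ (m (w₁, b₀))) : ℤ) : ℝ) := by
      rw [hε]; split_ifs <;> push_cast <;> ring
    rw [hεℤ]
    unfold webTrace
    rw [Finset.mul_sum]
    apply Finset.sum_congr rfl
    intro ST hST
    rw [colorings, Finset.mem_filter] at hST
    obtain ⟨-, hc1, hc2, hc3, hc4, hc5, hc6⟩ := hST
    have hb₀ : blackSign LB' ST.2 b₀
        = (if Odd n then 1 else (-1 : ℤ) ^ (m (w₁, b₀))) * blackSign LB ST.2 b₀ := by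
      unfold blackSign
      rw [hL1, hL2]
      have hnd : (w₁ :: t).Nodup := by rw [← hL1]; exact (hL.2 b₀).1
      have hmem : ∀ w, w ∈ w₁ :: t := by rw [← hL1]; exact (hL.2 b₀).2
      have := listSign_flatMap_rotate (fun w => ST.2 (w, b₀))
        (fun w => (Finset.sort (ST.2 (w, b₀)) (· ≤ ·)).map Fin.val) w₁ t rfl hnd hmem
        (fun w w' hww' => hc5 b₀ w w' hww') (hc6 b₀)
      rw [this, hc2 (w₁, b₀)]
    have hprod : ∏ b, blackSign LB' ST.2 b
        = (if Odd n then 1 else (-1 : ℤ) ^ (m (w₁, b₀))) * ∏ b, blackSign LB ST.2 b := by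
      calc ∏ b, blackSign LB' ST.2 b
          = ∏ b, (if b = b₀ then (if Odd n then 1 else (-1 : ℤ) ^ (m (w₁, b₀))) else 1)
              * blackSign LB ST.2 b := by
            apply Finset.prod_congr rfl
            intro b _
            by_cases hb : b = b₀
            · subst hb; rw [if_pos rfl, hb₀]
            · rw [if_neg hb, one_mul]
              unfold blackSign
              rw [hoth b hb]
        _ = (∏ b, if b = b₀ then (if Odd n then 1 else (-1 : ℤ) ^ (m (w₁, b₀))) else 1)
              * ∏ b, blackSign LB ST.2 b := Finset.prod_mul_distrib
        _ = _ := by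
            rw [Finset.prod_ite_eq' Finset.univ b₀
              (fun _ => (if Odd n then 1 else (-1 : ℤ) ^ (m (w₁, b₀))))]
            simp
    rw [hprod]
    push_cast
    ring
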